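/- Let B ∈ ℝ^{n×n} be a symmetric irreducible nonsingular M-matrix with smallest eigenvalue μ and a corresponding positive eigenvector p, β > 0, and fix λ > μ. Let u be the unique positive solution of β·diag(u^[2])u + Bu = λu. If u₀ = αp with α large enough that u₀ > u componentwise and min_i β(αp_i)² > λ − μ, then the Newton iteration defined by (3β·diag(u_k^[2]) + B − λI)·u_{k+1} = 2β·diag(u_k^[2])·u_k converges to u monotonically: u < ⋯ < u₂ < u₁ < u₀ componentwise. -/

import Mathlib

open Matrix Filter Topology

/-- Spectral radius of a real matrix (over its complex spectrum). -/
noncomputable def specRad {n : ℕ} (A : Matrix (Fin n) (Fin n) ℝ) : ℝ :=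
  sSup {r : ℝ | ∃ μ : ℂ, μ ∈ spectrum ℂ (A.map (fun x => (x : ℂ))) ∧ r = ‖μ‖}

/-- Entrywise nonnegative matrix. -/
def MatNonneg {n : ℕ} (A : Matrix (Fin n) (Fin n) ℝ) : Prop := ∀ i j, 0 ≤ A i j

/-- `B` is an M-matrix: `B = s•I - A` with `A ≥ 0` and `s ≥ ρ(A)`. -/
def IsMMat {n : ℕ} (B : Matrix (Fin n) (Fin n) ℝ) : Prop :=
  ∃ s A, MatNonneg A ∧ specRad A ≤ s ∧ B = s • (1 : Matrix (Fin n) (Fin n) ℝ) - A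

/-- `B` is a nonsingular M-matrix: `B = s•I - A` with `A ≥ 0` and `s > ρ(A)`. -/
def IsNsMMat {n : ℕ} (B : Matrix (Fin n) (Fin n) ℝ) : Prop :=
  ∃ s A, MatNonneg A ∧ specRad A < s ∧ B = s • (1 : Matrix (Fin n) (Fin n) ℝ) - A

/-- Irreducibility: no nonempty proper index set `I` with `B i j = 0` for `i ∈ I`, `j ∉ I`. -/
def MatIrred {n : ℕ} (B : Matrix (Fin n) (Fin n) ℝ) : Prop :=
  ¬ ∃ I : Finset (Fin n), I.Nonempty ∧ I ≠ Finset.univ ∧ ∀ i ∈ I, ∀ j ∉ I, B i j = 0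

/-- `A(u) = β·diag(u^[2]) + B`. -/
noncomputable def AU {n : ℕ} (β : ℝ) (B : Matrix (Fin n) (Fin n) ℝ) (u : Fin n → ℝ) :
    Matrix (Fin n) (Fin n) ℝ :=
  β • Matrix.diagonal (fun i => u i ^ 2) + B

/-- Jacobian `J(u,λ) = 3β·diag(u^[2]) + B - λI`. -/
noncomputable def JU {n : ℕ} (β lam : ℝ) (B : Matrix (Fin n) (Fin n) ℝ) (u : Fin n → ℝ) :
    Matrix (Fin n) (Fin n) ℝ :=
  (3 * β) • Matrix.diagonal (fun i => u i ^ 2) + B - lam • (1 : Matrix (Fin n) (Fin n) ℝ)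

/-- Smallest (real) eigenvalue. -/
noncomputable def smallestEig {n : ℕ} (B : Matrix (Fin n) (Fin n) ℝ) : ℝ :=
  sInf {μ : ℝ | ∃ v : Fin n → ℝ, v ≠ 0 ∧ B.mulVec v = μ • v}

/-- Largest (real) eigenvalue. -/
noncomputable def largestEig {n : ℕ} (B : Matrix (Fin n) (Fin n) ℝ) : ℝ :=
  sSup {μ : ℝ | ∃ v : Fin n → ℝ, v ≠ 0 ∧ B.mulVec v = μ • v}

/-- Euclidean norm of a vector. -/
noncomputable def vecNorm {n : ℕ} (u : Fin n → ℝ) : ℝ := Real.sqrt (∑ i, u i ^ 2)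

/-- 1-norm of a vector. -/
noncomputable def vecNorm1 {n : ℕ} (u : Fin n → ℝ) : ℝ := ∑ i, |u i|

/-- Spectral (operator 2-) norm of a matrix. -/
noncomputable def matNorm {n : ℕ} (A : Matrix (Fin n) (Fin n) ℝ) : ℝ :=
  sSup {r : ℝ | ∃ x : Fin n → ℝ, vecNorm x ≤ 1 ∧ r = vecNorm (A.mulVec x)}

lemma mulVec_JU' {n : ℕ} (β lam : ℝ) (B : Matrix (Fin n) (Fin n) ℝ) (u w : Fin n → ℝ) (i : Fin n) :
    (JU β lam B u).mulVec w i = 3 * β * u i ^ 2 * w i + B.mulVec w i - lam * w i := by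
  simp [JU, Matrix.sub_mulVec, Matrix.add_mulVec, Matrix.smul_mulVec,
    Matrix.mulVec_diagonal, Matrix.one_mulVec]
  ring

lemma mulVec_AU' {n : ℕ} (β : ℝ) (B : Matrix (Fin n) (Fin n) ℝ) (u w : Fin n → ℝ) (i : Fin n) :
    (AU β B u).mulVec w i = β * u i ^ 2 * w i + B.mulVec w i := by
  simp [AU, Matrix.add_mulVec, Matrix.smul_mulVec, Matrix.mulVec_diagonal]
  ring

lemma zmat_nonneg {n : ℕ} (J : Matrix (Fin n) (Fin n) ℝ)
    (hoff : ∀ i j, i ≠ j → J i j ≤ 0)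
    (w : Fin n → ℝ) (hw : ∀ i, 0 < w i) (hJw : ∀ i, 0 < J.mulVec w i)
    (x : Fin n → ℝ) (hx : ∀ i, 0 ≤ J.mulVec x i) : ∀ i, 0 ≤ x i := by
  by_contra hcon
  push_neg at hcon
  obtain ⟨i₁, hi₁⟩ := hcon
  obtain ⟨i₀, -, hmin⟩ := Finset.exists_min_image Finset.univ (fun i => x i / w i)
    ⟨i₁, Finset.mem_univ i₁⟩
  set t := x i₀ / w i₀ with ht
  have htneg : t < 0 :=
    lt_of_le_of_lt (hmin i₁ (Finset.mem_univ i₁)) (div_neg_of_neg_of_pos hi₁ (hw i₁))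
  have hy : ∀ j, t * w j ≤ x j := by
    intro j
    have h := hmin j (Finset.mem_univ j)
    calc t * w j ≤ (x j / w j) * w j := by
          exact mul_le_mul_of_nonneg_right h (hw j).le
      _ = x j := div_mul_cancel₀ _ (hw j).ne'
  have hsplit : J.mulVec x i₀ - t * J.mulVec w i₀ = ∑ j, J i₀ j * (x j - t * w j) := by
    simp only [Matrix.mulVec, dotProduct, Finset.mul_sum, ← Finset.sum_sub_distrib]
    apply Finset.sum_congr rfl
    intro j _
    ring
  have hsum : ∑ j, J i₀ j * (x j - t * w j) ≤ 0 := by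
    apply Finset.sum_nonpos
    intro j _
    by_cases hj : j = i₀
    · subst hj
      have : x j - t * w j = 0 := by
        rw [ht, div_mul_cancel₀ _ (hw j).ne']; ring
      rw [this, mul_zero]
    · exact mul_nonpos_iff.mpr (Or.inr ⟨hoff i₀ j (Ne.symm hj), sub_nonneg.2 (hy j)⟩)
  have : J.mulVec x i₀ ≤ t * J.mulVec w i₀ := by linarith
  have : J.mulVec x i₀ < 0 :=
    lt_of_le_of_lt this (mul_neg_of_neg_of_pos htneg (hJw i₀))
  exact absurd (hx i₀) (not_le.mpr this)

lemma zmat_pos {n : ℕ} (J : Matrix (Fin n) (Fin n) ℝ)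
    (hirr : MatIrred J)
    (hoff : ∀ i j, i ≠ j → J i j ≤ 0)
    (w : Fin n → ℝ) (hw : ∀ i, 0 < w i) (hJw : ∀ i, 0 < J.mulVec w i)
    (x : Fin n → ℝ) (hx : ∀ i, 0 ≤ J.mulVec x i) (hxne : ∃ i, J.mulVec x i ≠ 0) :
    ∀ i, 0 < x i := by
  have hx0 := zmat_nonneg J hoff w hw hJw x hx
  by_contra hcon
  push_neg at hcon
  obtain ⟨i₀, hi₀⟩ := hcon
  have hxi₀ : x i₀ = 0 := le_antisymm hi₀ (hx0 i₀)
  set I : Finset (Fin n) := Finset.univ.filter (fun i => x i = 0) with hI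
  have hI₀ : i₀ ∈ I := by simp [hI, hxi₀]
  have hxnz : x ≠ 0 := by
    intro h
    obtain ⟨i, hi⟩ := hxne
    rw [h, Matrix.mulVec_zero] at hi
    exact hi rfl
  obtain ⟨j₀, hj₀⟩ := Function.ne_iff.mp hxnz
  have hIne : I ≠ Finset.univ := by
    intro h
    have : j₀ ∈ I := h ▸ Finset.mem_univ j₀
    simp [hI] at this
    exact hj₀ this
  apply hirr
  refine ⟨I, ⟨i₀, hI₀⟩, hIne, ?_⟩
  intro i hi j hj
  have hxi : x i = 0 := by simpa [hI] using hi
  have hterm : ∀ k ∈ Finset.univ.filter (fun k => ¬ x k = 0), J i k * x k ≤ 0 := by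
    intro k hk
    simp [hI] at hk
    have hik : i ≠ k := by
      intro h; exact hk (h ▸ hxi)
    exact mul_nonpos_iff.mpr (Or.inr ⟨hoff i k hik, hx0 k⟩)
  have hsplit : J.mulVec x i = ∑ k ∈ Finset.univ.filter (fun k => ¬ x k = 0), J i k * x k := by
    have h1 : J.mulVec x i = ∑ k, J i k * x k := rfl
    rw [h1, ← Finset.sum_filter_add_sum_filter_not Finset.univ (fun k => x k = 0)]
    have h2 : ∑ k ∈ Finset.univ.filter (fun k => x k = 0), J i k * x k = 0 := by
      apply Finset.sum_eq_zero
      intro k hk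
      simp at hk
      rw [hk, mul_zero]
    rw [h2, zero_add]
  have hzero : ∑ k ∈ Finset.univ.filter (fun k => ¬ x k = 0), J i k * x k = 0 :=
    le_antisymm (Finset.sum_nonpos hterm) (hsplit ▸ hx i)
  have := (Finset.sum_eq_zero_iff_of_nonpos hterm).mp hzero j (by simp [hI] at hj ⊢; exact hj)
  have hxj : 0 < x j := lt_of_le_of_ne (hx0 j) (by
    intro h
    exact absurd (by simp [hI, ← h]) hj)
  exact (mul_eq_zero.mp this).resolve_right hxj.ne'

theorem stmt6 {n : ℕ} [NeZero n] (B : Matrix (Fin n) (Fin n) ℝ) (β lam α : ℝ)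
    (hB1 : B.IsSymm) (hB2 : MatIrred B) (hB3 : IsNsMMat B) (hβ : 0 < β)
    (p : Fin n → ℝ) (hp : ∀ i, 0 < p i) (hpe : B.mulVec p = smallestEig B • p)
    (hlam : smallestEig B < lam)
    (ustar : Fin n → ℝ) (hstar : ∀ i, 0 < ustar i)
    (hstareq : (AU β B ustar).mulVec ustar = lam • ustar)
    (hstaru : ∀ w : Fin n → ℝ, (∀ i, 0 < w i) →
      (AU β B w).mulVec w = lam • w → w = ustar)
    (v : ℕ → Fin n → ℝ) (hv0 : v 0 = α • p)
    (hα1 : ∀ i, ustar i < α * p i)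
    (hα2 : ∀ i, lam - smallestEig B < β * (α * p i) ^ 2)
    (hrec : ∀ k, (JU β lam B (v k)).mulVec (v (k + 1)) = fun i => 2 * β * (v k i) ^ 3) :
    (∀ k, ∀ i, ustar i < v (k + 1) i ∧ v (k + 1) i < v k i) ∧
    Filter.Tendsto v Filter.atTop (nhds ustar) := by
  have hne : Nonempty (Fin n) := ⟨⟨0, Nat.pos_of_ne_zero (NeZero.ne n)⟩⟩
  obtain ⟨i₀⟩ := hne
  -- off-diagonal entries of B are nonpositive
  have hoffB : ∀ i j, i ≠ j → B i j ≤ 0 := by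
    obtain ⟨s, A, hA, -, hBeq⟩ := hB3
    intro i j hij
    rw [hBeq]
    simp [Matrix.sub_apply, Matrix.one_apply_ne hij]
    exact hA i j
  -- off-diagonal entries of JU agree with those of B
  have hoffJeq : ∀ (u : Fin n → ℝ) i j, i ≠ j → JU β lam B u i j = B i j := by
    intro u i j hij
    simp [JU, Matrix.sub_apply, Matrix.add_apply, Matrix.diagonal_apply_ne _ hij,
      Matrix.one_apply_ne hij]
  have hoffJ : ∀ (u : Fin n → ℝ) i j, i ≠ j → JU β lam B u i j ≤ 0 := by
    intro u i j hij
    rw [hoffJeq u i j hij]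
    exact hoffB i j hij
  have hirrJ : ∀ u : Fin n → ℝ, MatIrred (JU β lam B u) := by
    intro u hcon
    obtain ⟨I, hne', hneu, hz⟩ := hcon
    refine hB2 ⟨I, hne', hneu, fun i hi j hj => ?_⟩
    have hij : i ≠ j := fun h => hj (h ▸ hi)
    rw [← hoffJeq u i j hij]
    exact hz i hi j hj
  -- the fixed-point equation componentwise
  have hBstar : ∀ i, B.mulVec ustar i = lam * ustar i - β * ustar i ^ 3 := by
    intro i
    have h := congrFun hstareq i
    rw [mulVec_AU'] at h
    have e : β * ustar i ^ 2 * ustar i = β * ustar i ^ 3 := by ring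
    simp only [Pi.smul_apply, smul_eq_mul] at h
    linarith [e ▸ h]
  -- the positive witness for the Z-matrix lemmas
  have hJw : ∀ k, (∀ i, ustar i < v k i) →
      ∀ i, 0 < (JU β lam B (v k)).mulVec ustar i := by
    intro k hk i
    rw [mulVec_JU', hBstar i]
    have h1 := hstar i
    have h2 := hk i
    nlinarith [mul_pos hβ (mul_pos h1 h1), sq_nonneg (v k i - ustar i),
      mul_pos (mul_pos hβ h1) (mul_pos (h1.trans h2) (h1.trans h2))]
  -- induction step: iterates stay above ustar
  have hstep : ∀ k, (∀ i, ustar i < v k i) → ∀ i, ustar i < v (k + 1) i := by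
    intro k hk
    have hx : ∀ i, 0 < (JU β lam B (v k)).mulVec (v (k + 1) - ustar) i := by
      intro i
      rw [Matrix.mulVec_sub]
      simp only [Pi.sub_apply]
      rw [congrFun (hrec k) i, mulVec_JU', hBstar i]
      have h1 := hstar i
      have h2 := hk i
      nlinarith [sq_nonneg (v k i - ustar i), mul_pos hβ h1,
        mul_pos (mul_pos hβ (sub_pos.2 h2)) (mul_pos (sub_pos.2 h2) (h1.trans h2))]
    have hpos := zmat_pos (JU β lam B (v k)) (hirrJ (v k)) (hoffJ (v k)) ustar hstar
      (hJw k hk) (v (k + 1) - ustar) (fun i => (hx i).le) ⟨i₀, (hx i₀).ne'⟩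
    intro i
    have := hpos i
    simp only [Pi.sub_apply] at this
    linarith
  have hP : ∀ k, ∀ i, ustar i < v k i := by
    intro k
    induction k with
    | zero =>
        intro i
        rw [hv0]
        simpa using hα1 i
    | succ k ih => exact hstep k ih
  -- the residual F
  set F : (Fin n → ℝ) → Fin n → ℝ :=
    fun u i => β * u i ^ 3 + B.mulVec u i - lam * u i with hF
  have hFrec : ∀ k i, (JU β lam B (v k)).mulVec (v k - v (k + 1)) i = F (v k) i := by
    intro k i
    rw [Matrix.mulVec_sub]
    simp only [Pi.sub_apply]
    rw [congrFun (hrec k) i, mulVec_JU', hF]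
    ring
  have hF0 : ∀ i, 0 < F (v 0) i := by
    intro i
    have hBv0 : B.mulVec (α • p) i = α * (smallestEig B * p i) := by
      rw [Matrix.mulVec_smul, hpe]
      simp [smul_eq_mul, mul_assoc]
    simp only [hF, hv0, hBv0, Pi.smul_apply, smul_eq_mul]
    have h1 := hα1 i
    have h2 := hα2 i
    have h3 := hstar i
    nlinarith [mul_pos (h3.trans h1) (sub_pos.2 h2)]
  have hFsucc : ∀ k i, 0 ≤ F (v (k + 1)) i := by
    intro k i
    have h1 := congrFun (hrec k) i
    rw [mulVec_JU'] at h1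
    have hw := hP (k + 1) i
    have hv' := hP k i
    have hu := hstar i
    have hpos : 0 < v (k + 1) i + 2 * v k i := by linarith
    simp only [hF]
    nlinarith [mul_nonneg (mul_nonneg hβ.le (sq_nonneg (v k i - v (k + 1) i))) hpos.le]
  have hFnn : ∀ k i, 0 ≤ F (v k) i := by
    intro k
    cases k with
    | zero => exact fun i => (hF0 i).le
    | succ k => exact hFsucc k
  have hFne : ∀ k, ∃ i, F (v k) i ≠ 0 := by
    intro k
    by_contra h
    push_neg at h
    have hsol : (AU β B (v k)).mulVec (v k) = lam • v k := by
      funext i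
      rw [mulVec_AU']
      have hi := h i
      simp only [hF] at hi
      simp only [Pi.smul_apply, smul_eq_mul]
      nlinarith [hi]
    have hposk : ∀ i, 0 < v k i := fun i => (hstar i).trans (hP k i)
    have heq := hstaru (v k) hposk hsol
    have h2 := hP k i₀
    rw [heq] at h2
    exact lt_irrefl _ h2
  have hmono : ∀ k i, v (k + 1) i < v k i := by
    intro k
    obtain ⟨i₁, hi₁⟩ := hFne k
    have hpos := zmat_pos (JU β lam B (v k)) (hirrJ (v k)) (hoffJ (v k)) ustar hstar
      (hJw k (hP k)) (v k - v (k + 1)) (fun i => (hFrec k i) ▸ hFnn k i)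
      ⟨i₁, (hFrec k i₁) ▸ hi₁⟩
    intro i
    have := hpos i
    simp only [Pi.sub_apply] at this
    linarith
  refine ⟨fun k i => ⟨hP (k + 1) i, hmono k i⟩, ?_⟩
  -- convergence
  have hanti : ∀ i, Antitone fun k => v k i :=
    fun i => antitone_nat_of_succ_le fun k => (hmono k i).le
  have hbdd : ∀ i, BddBelow (Set.range fun k => v k i) := by
    intro i
    refine ⟨ustar i, ?_⟩
    rintro x ⟨k, rfl⟩
    exact (hP k i).le
  set L : Fin n → ℝ := fun i => ⨅ k, v k i with hLdef
  have hL : ∀ i, Tendsto (fun k => v k i) atTop (nhds (L i)) :=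
    fun i => tendsto_atTop_ciInf (hanti i) (hbdd i)
  have hLge : ∀ i, ustar i ≤ L i := fun i => le_ciInf fun k => (hP k i).le
  have hLpos : ∀ i, 0 < L i := fun i => (hstar i).trans_le (hLge i)
  have hL' : ∀ i, Tendsto (fun k => v (k + 1) i) atTop (nhds (L i)) :=
    fun i => (hL i).comp (tendsto_add_atTop_nat 1)
  have hLeq : (AU β B L).mulVec L = lam • L := by
    have key : ∀ i, 3 * β * L i ^ 2 * L i + (∑ j, B i j * L j) - lam * L i
        = 2 * β * L i ^ 3 := by
      intro i
      have t1 : Tendsto (fun k => 3 * β * (v k i) ^ 2 * (v (k + 1) i)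
          + (∑ j, B i j * v (k + 1) j) - lam * (v (k + 1) i)) atTop
          (nhds (3 * β * L i ^ 2 * L i + (∑ j, B i j * L j) - lam * L i)) := by
        refine Tendsto.sub (Tendsto.add ?_ ?_) ?_
        · exact (tendsto_const_nhds.mul ((hL i).pow 2)).mul (hL' i)
        · exact tendsto_finset_sum _ fun j _ => tendsto_const_nhds.mul (hL' j)
        · exact tendsto_const_nhds.mul (hL' i)
      have t2 : (fun k => 3 * β * (v k i) ^ 2 * (v (k + 1) i)
          + (∑ j, B i j * v (k + 1) j) - lam * (v (k + 1) i))
          = fun k => 2 * β * (v k i) ^ 3 := by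
        funext k
        have h1 := congrFun (hrec k) i
        rw [mulVec_JU'] at h1
        have h2 : B.mulVec (v (k + 1)) i = ∑ j, B i j * v (k + 1) j := rfl
        rw [h2] at h1
        linarith
      rw [t2] at t1
      have t3 : Tendsto (fun k => 2 * β * (v k i) ^ 3) atTop
          (nhds (2 * β * L i ^ 3)) := tendsto_const_nhds.mul ((hL i).pow 3)
      exact tendsto_nhds_unique t1 t3
    funext i
    rw [mulVec_AU']
    have h2 : B.mulVec L i = ∑ j, B i j * L j := rfl
    simp only [Pi.smul_apply, smul_eq_mul, h2]
    have := key i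
    nlinarith [this]
  have hLu : L = ustar := hstaru L hLpos hLeq
  rw [tendsto_pi_nhds]
  intro i
  have := hL i
  rw [hLu] at this
  exact this
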